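/- Fix N ≥ 1, an index i, a finite neighbour set S_i of indices with i ∉ S_i, reals a_{ik} and a_{ki} (k ∈ S_i), weights p_{ik}, q_{ik} with 0 ≤ p_{ik} ≤ q_{ik} and p_{ik} > 0 whenever a_{ik} > 0, and continuous functions u_{ik} : ℝ^N → ℝ (k ∈ S_i). For U = (u_1,…,u_N) ∈ ℝ^N define P_i^+(U) = ∑_{k ∈ S_i, a_{ik} > 0 or a_{ki} > 0} p_{ik} [ (u_i − u_k)⁺ + (u_i − u_{ik}(U))⁺ ], P_i^-(U) analogously with negative parts, Q_i^+(U) = ∑_{k ∈ S_i} q_{ik} [ (u_k − u_i)⁺ + (u_{ik}(U) − u_i)⁺ ], Q_i^-(U) analogously with negative parts, R_i^+(U) = min{1, Q_i^+(U)/P_i^+(U)} if P_i^+(U) ≠ 0 and R_i^+(U) = 1 otherwise, analogously R_i^-(U), and for j ∈ S_i set β_{ij}(U) = 1 − R_i^+(U) if u_i > u_j, β_{ij}(U) = 0 if u_i = u_j, and β_{ij}(U) = 1 − R_i^-(U) if u_i < u_j. Then, for every j ∈ S_i with a_{ij} > 0, the function U ↦ β_{ij}(U)(u_j − u_i) is continuous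 on ℝ^N. -/

import Mathlib

/-- Assumption (A1) for the SMUAS method: with the symmetrized limiter quantities
`P_i^±(U)`, `Q_i^±(U)` built from weights `0 ≤ p_{ik} ≤ q_{ik}` (with `p_{ik} > 0`
whenever `a_{ik} > 0`) and continuous symmetrized values `u_{ik}(U)`, and with
`R_i^±(U) = min{1, Q_i^±(U)/P_i^±(U)}` (set to `1` if `P_i^±(U) = 0`) and
`β_{ij}(U) = 1 − R_i^+(U)` if `u_i > u_j`, `0` if `u_i = u_j`, `1 − R_i^-(U)` if
`u_i < u_j`, the function `U ↦ β_{ij}(U)(u_j − u_i)` is continuous for every `j ∈ S_i`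
with `a_{ij} > 0`. -/
theorem smuas_limiter_continuous
    (N : ℕ) (hN : 1 ≤ N) (i : Fin N) (S : Finset (Fin N)) (hiS : i ∉ S)
    (a a' p q : Fin N → ℝ)
    (hp0 : ∀ k ∈ S, 0 ≤ p k) (hpq : ∀ k ∈ S, p k ≤ q k)
    (hpa : ∀ k ∈ S, 0 < a k → 0 < p k)
    (uik : Fin N → (Fin N → ℝ) → ℝ)
    (huik : ∀ k ∈ S, Continuous (uik k))
    (Pp Pm Qp Qm Rp Rm : (Fin N → ℝ) → ℝ)
    (hPp : ∀ U : Fin N → ℝ, Pp U = ∑ k ∈ S.filter (fun k => 0 < a k ∨ 0 < a' k),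
        p k * (max (U i - U k) 0 + max (U i - uik k U) 0))
    (hPm : ∀ U : Fin N → ℝ, Pm U = ∑ k ∈ S.filter (fun k => 0 < a k ∨ 0 < a' k),
        p k * (min (U i - U k) 0 + min (U i - uik k U) 0))
    (hQp : ∀ U : Fin N → ℝ, Qp U = ∑ k ∈ S,
        q k * (max (U k - U i) 0 + max (uik k U - U i) 0))
    (hQm : ∀ U : Fin N → ℝ, Qm U = ∑ k ∈ S,
        q k * (min (U k - U i) 0 + min (uik k U - U i) 0))
    (hRp : ∀ U : Fin N → ℝ, Rp U = if Pp U ≠ 0 then min 1 (Qp U / Pp U) else 1)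
    (hRm : ∀ U : Fin N → ℝ, Rm U = if Pm U ≠ 0 then min 1 (Qm U / Pm U) else 1)
    (β : Fin N → (Fin N → ℝ) → ℝ)
    (hβ : ∀ j ∈ S, ∀ U : Fin N → ℝ,
        β j U = if U j < U i then 1 - Rp U else if U i < U j then 1 - Rm U else 0) :
    ∀ j ∈ S, 0 < a j → Continuous (fun U : Fin N → ℝ => β j U * (U j - U i)) := by
  intro j hj haj
  have hpj : 0 < p j := hpa j hj haj
  have hjf : j ∈ S.filter (fun k => 0 < a k ∨ 0 < a' k) :=
    Finset.mem_filter.2 ⟨hj, Or.inl haj⟩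
  -- continuity of the building blocks
  have hcont_apply : ∀ k : Fin N, Continuous (fun U : Fin N → ℝ => U k) :=
    fun k => continuous_apply k
  have hPpC : Continuous Pp := by
    have : Pp = fun U => ∑ k ∈ S.filter (fun k => 0 < a k ∨ 0 < a' k),
        p k * (max (U i - U k) 0 + max (U i - uik k U) 0) := funext hPp
    rw [this]
    refine continuous_finset_sum _ (fun k hk => ?_)
    have hk' : k ∈ S := (Finset.mem_filter.1 hk).1
    exact continuous_const.mul
      ((((hcont_apply i).sub (hcont_apply k)).max continuous_const).add
        (((hcont_apply i).sub (huik k hk')).max continuous_const))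
  have hPmC : Continuous Pm := by
    have : Pm = fun U => ∑ k ∈ S.filter (fun k => 0 < a k ∨ 0 < a' k),
        p k * (min (U i - U k) 0 + min (U i - uik k U) 0) := funext hPm
    rw [this]
    refine continuous_finset_sum _ (fun k hk => ?_)
    have hk' : k ∈ S := (Finset.mem_filter.1 hk).1
    exact continuous_const.mul
      ((((hcont_apply i).sub (hcont_apply k)).min continuous_const).add
        (((hcont_apply i).sub (huik k hk')).min continuous_const))
  have hQpC : Continuous Qp := by
    have : Qp = fun U => ∑ k ∈ S,
        q k * (max (U k - U i) 0 + max (uik k U - U i) 0) := funext hQp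
    rw [this]
    refine continuous_finset_sum _ (fun k hk => ?_)
    exact continuous_const.mul
      ((((hcont_apply k).sub (hcont_apply i)).max continuous_const).add
        (((huik k hk).sub (hcont_apply i)).max continuous_const))
  have hQmC : Continuous Qm := by
    have : Qm = fun U => ∑ k ∈ S,
        q k * (min (U k - U i) 0 + min (uik k U - U i) 0) := funext hQm
    rw [this]
    refine continuous_finset_sum _ (fun k hk => ?_)
    exact continuous_const.mul
      ((((hcont_apply k).sub (hcont_apply i)).min continuous_const).add
        (((huik k hk).sub (hcont_apply i)).min continuous_const))
  -- sign information
  have hPp_nonneg : ∀ U, 0 ≤ Pp U := by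
    intro U
    rw [hPp]
    refine Finset.sum_nonneg (fun k hk => ?_)
    have hk' : k ∈ S := (Finset.mem_filter.1 hk).1
    exact mul_nonneg (hp0 k hk') (add_nonneg (le_max_right _ _) (le_max_right _ _))
  have hQp_nonneg : ∀ U, 0 ≤ Qp U := by
    intro U
    rw [hQp]
    refine Finset.sum_nonneg (fun k hk => ?_)
    exact mul_nonneg ((hp0 k hk).trans (hpq k hk))
      (add_nonneg (le_max_right _ _) (le_max_right _ _))
  have hPm_nonpos : ∀ U, Pm U ≤ 0 := by
    intro U
    rw [hPm]
    refine Finset.sum_nonpos (fun k hk => ?_)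
    have hk' : k ∈ S := (Finset.mem_filter.1 hk).1
    exact mul_nonpos_of_nonneg_of_nonpos (hp0 k hk')
      (add_nonpos (min_le_right _ _) (min_le_right _ _))
  have hQm_nonpos : ∀ U, Qm U ≤ 0 := by
    intro U
    rw [hQm]
    refine Finset.sum_nonpos (fun k hk => ?_)
    exact mul_nonpos_of_nonneg_of_nonpos ((hp0 k hk).trans (hpq k hk))
      (add_nonpos (min_le_right _ _) (min_le_right _ _))
  -- R bounds
  have hRp_mem : ∀ U, 0 ≤ Rp U ∧ Rp U ≤ 1 := by
    intro U
    rw [hRp]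
    by_cases h : Pp U ≠ 0
    · rw [if_pos h]
      have hPpos : 0 < Pp U := lt_of_le_of_ne (hPp_nonneg U) (Ne.symm h)
      exact ⟨le_min zero_le_one (div_nonneg (hQp_nonneg U) hPpos.le), min_le_left _ _⟩
    · rw [if_neg h]
      exact ⟨zero_le_one, le_refl 1⟩
  have hRm_mem : ∀ U, 0 ≤ Rm U ∧ Rm U ≤ 1 := by
    intro U
    rw [hRm]
    by_cases h : Pm U ≠ 0
    · rw [if_pos h]
      have hPneg : Pm U < 0 := lt_of_le_of_ne (hPm_nonpos U) h
      exact ⟨le_min zero_le_one (div_nonneg_of_nonpos (hQm_nonpos U) hPneg.le),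
        min_le_left _ _⟩
    · rw [if_neg h]
      exact ⟨zero_le_one, le_refl 1⟩
  have hβbd : ∀ U, |β j U| ≤ 1 := by
    intro U
    rw [hβ j hj U]
    split_ifs with h1 h2
    · rw [abs_le]
      constructor
      · linarith [(hRp_mem U).2]
      · linarith [(hRp_mem U).1]
    · rw [abs_le]
      constructor
      · linarith [(hRm_mem U).2]
      · linarith [(hRm_mem U).1]
    · simp
  -- lower bounds on |P| on the relevant open sets
  have hPp_pos : ∀ U : Fin N → ℝ, U j < U i → 0 < Pp U := by
    intro U hU
    rw [hPp]
    have hterm : 0 < p j * (max (U i - U j) 0 + max (U i - uik j U) 0) := by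
      have h1 : 0 < max (U i - U j) 0 := lt_max_of_lt_left (by linarith)
      have h2 : 0 ≤ max (U i - uik j U) 0 := le_max_right _ _
      exact mul_pos hpj (by linarith)
    refine lt_of_lt_of_le hterm (Finset.single_le_sum
      (f := fun k => p k * (max (U i - U k) 0 + max (U i - uik k U) 0))
      (fun k hk => ?_) hjf)
    have hk' : k ∈ S := (Finset.mem_filter.1 hk).1
    exact mul_nonneg (hp0 k hk') (add_nonneg (le_max_right _ _) (le_max_right _ _))
  have hPm_neg : ∀ U : Fin N → ℝ, U i < U j → Pm U < 0 := by
    intro U hU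
    rw [hPm]
    have hterm : p j * (min (U i - U j) 0 + min (U i - uik j U) 0) < 0 := by
      have h1 : min (U i - U j) 0 < 0 := min_lt_of_left_lt (by linarith)
      have h2 : min (U i - uik j U) 0 ≤ 0 := min_le_right _ _
      exact mul_neg_of_pos_of_neg hpj (by linarith)
    rw [← Finset.add_sum_erase _ _ hjf]
    have hrest : ∑ k ∈ (S.filter (fun k => 0 < a k ∨ 0 < a' k)).erase j,
        p k * (min (U i - U k) 0 + min (U i - uik k U) 0) ≤ 0 := by
      refine Finset.sum_nonpos (fun k hk => ?_)
      have hk' : k ∈ S := (Finset.mem_filter.1 (Finset.mem_erase.1 hk).2).1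
      exact mul_nonpos_of_nonneg_of_nonpos (hp0 k hk')
        (add_nonpos (min_le_right _ _) (min_le_right _ _))
    linarith
  -- main continuity argument
  rw [continuous_iff_continuousAt]
  intro U0
  rcases lt_trichotomy (U0 j) (U0 i) with hlt | heq | hgt
  · -- case U0 j < U0 i : use Rp, with Pp > 0 near U0
    have hO : IsOpen {U : Fin N → ℝ | U j < U i} :=
      isOpen_lt (hcont_apply j) (hcont_apply i)
    have hg : ContinuousAt (fun U => (1 - min 1 (Qp U / Pp U)) * (U j - U i)) U0 := by
      have hne : Pp U0 ≠ 0 := ne_of_gt (hPp_pos U0 hlt)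
      exact (continuousAt_const.sub (continuousAt_const.min
        ((hQpC.continuousAt).div (hPpC.continuousAt) hne))).mul
        (((hcont_apply j).continuousAt).sub ((hcont_apply i).continuousAt))
    refine hg.congr ?_
    filter_upwards [hO.mem_nhds hlt] with U hU
    rw [hβ j hj U, if_pos hU, hRp U, if_pos (ne_of_gt (hPp_pos U hU))]
  · -- case U0 j = U0 i : squeeze to zero
    have hbound : ∀ U : Fin N → ℝ, ‖β j U * (U j - U i)‖ ≤ |U j - U i| := by
      intro U
      rw [Real.norm_eq_abs, abs_mul]
      exact mul_le_of_le_one_left (abs_nonneg _) (hβbd U)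
    have hgt0 : Filter.Tendsto (fun U : Fin N → ℝ => |U j - U i|) (nhds U0) (nhds 0) := by
      have this : Filter.Tendsto (fun U : Fin N → ℝ => |U j - U i|) (nhds U0) (nhds |U0 j - U0 i|) :=
        (((hcont_apply j).sub (hcont_apply i)).abs).tendsto U0
      rwa [show |U0 j - U0 i| = 0 by rw [heq, sub_self, abs_zero]] at this
    have hsq := squeeze_zero_norm hbound hgt0
    have hf0 : β j U0 * (U0 j - U0 i) = 0 := by rw [heq, sub_self, mul_zero]
    show Filter.Tendsto _ (nhds U0) (nhds (β j U0 * (U0 j - U0 i)))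
    rw [hf0]
    exact hsq
  · -- case U0 i < U0 j : use Rm, with Pm < 0 near U0
    have hO : IsOpen {U : Fin N → ℝ | U i < U j} :=
      isOpen_lt (hcont_apply i) (hcont_apply j)
    have hg : ContinuousAt (fun U => (1 - min 1 (Qm U / Pm U)) * (U j - U i)) U0 := by
      have hne : Pm U0 ≠ 0 := ne_of_lt (hPm_neg U0 hgt)
      exact (continuousAt_const.sub (continuousAt_const.min
        ((hQmC.continuousAt).div (hPmC.continuousAt) hne))).mul
        (((hcont_apply j).continuousAt).sub ((hcont_apply i).continuousAt))
    refine hg.congr ?_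
    filter_upwards [hO.mem_nhds hgt] with U hU
    rw [hβ j hj U, if_neg (not_lt_of_gt hU), if_pos hU, hRm U,
      if_pos (ne_of_lt (hPm_neg U hU))]
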